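/- Let p, k₂ be integers with p > 0, 0 < k₂, and 3k₂ > p ≥ 2k₂. Define for an integer n: f(n) = 1 if [n]_p ∈ {-k₂+1, ..., 0}, f(n) = -1 if [n]_p ∈ {1, ..., k₂}, and f(n) = 0 otherwise, where [n]_p ∈ (-p/2, p/2] is the reduction of n mod p. Then there is no integer y with f(y) = 0 and f(y + k₂) = 0. -/
import Mathlib


/-- `redp p n` is `[n]_p`, the representative of `n` mod `p` in `(-p/2, p/2]`. -/
def redp (p n : ℤ) : ℤ := (n + (p - 1) / 2) % p - (p - 1) / 2

/-- The sign function `f` of formula (1). -/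
def dAsign (p k₂ n : ℤ) : ℤ :=
  if -k₂ + 1 ≤ redp p n ∧ redp p n ≤ 0 then 1
  else if 1 ≤ redp p n ∧ redp p n ≤ k₂ then -1
  else 0

/-- if `2k₂ ≤ p < 3k₂`, then there is no `y` with
`f(y) = 0` and `f(y + k₂) = 0`. -/
theorem no_adjacent_zeros_of_p_lt (p k₂ : ℤ) (hp : 0 < p) (hk : 0 < k₂)
    (h1 : p < 3 * k₂) (h2 : 2 * k₂ ≤ p) :
    ¬ ∃ y : ℤ, dAsign p k₂ y = 0 ∧ dAsign p k₂ (y + k₂) = 0 := by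
  rintro ⟨y, hy, hy'⟩
  set c : ℤ := (p - 1) / 2 with hcdef
  set a : ℤ := (y + c) % p with hadef
  set b : ℤ := (y + k₂ + c) % p with hbdef
  have ha0 : 0 ≤ a := Int.emod_nonneg _ (by omega)
  have ha1 : a < p := Int.emod_lt_of_pos _ hp
  have hb0 : 0 ≤ b := Int.emod_nonneg _ (by omega)
  have hb1 : b < p := Int.emod_lt_of_pos _ hp
  have hc : p - 1 = 2 * c ∨ p - 1 = 2 * c + 1 := by
    have := Int.emod_two_eq (p - 1)
    have := Int.mul_ediv_add_emod (p - 1) 2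
    omega
  have hb : b = (a + k₂) % p := by
    rw [hadef, Int.emod_add_emod, hbdef]
    ring_nf
  have hab : b = a + k₂ ∨ b = a + k₂ - p := by
    rcases lt_or_ge (a + k₂) p with h | h
    · left; rw [hb, Int.emod_eq_of_lt (by omega) h]
    · right
      have : (a + k₂) % p = (a + k₂ - p) % p := by
        conv_lhs => rw [show a + k₂ = (a + k₂ - p) + p by ring]
        simp [Int.add_mul_emod_self_left]
      rw [hb, this, Int.emod_eq_of_lt (by omega) (by omega)]
  have hry : redp p y = a - c := rfl
  have hry' : redp p (y + k₂) = b - c := rfl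
  unfold dAsign at hy hy'
  rw [hry] at hy
  rw [hry'] at hy'
  split_ifs at hy hy' with h₁ h₂ h₃ h₄ <;> omega
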